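/- Let α = 1 − c(1−p), p̃ = p/α, and for j ∈ ℤ₊ let A_j = {0, 1, …, j}. Then for all x, t, j ∈ ℤ₊: P_x(X_t ∈ A_j) − P_{x+1}(X_t ∈ A_j) = α^t · P_x^{(p̃)}(X_t = j), where P_x^{(p̃)} denotes the law of the chain with parameters (p̃, c) started at x. In particular, P_x(X_t ∈ A_j) − P_{x+1}(X_t ∈ A_j) ≥ α^t · P_x^{(p̃)}(X_t = j). -/

import Mathlib

open scoped BigOperators
open Filter

noncomputable section

/-- Probability mass function of a Binomial(n, ε) random variable, evaluated at k. -/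
def binomPMF (n : ℕ) (ε : ℝ) (k : ℕ) : ℝ :=
  if k ≤ n then (n.choose k : ℝ) * ε ^ k * (1 - ε) ^ (n - k) else 0

/-- Transition function `p^{p,c}` of the random walk with binomial catastrophes:
`p^{p,c}(i, i+1) = p` and `p^{p,c}(i, j) = (1-p) C(i,j) (1-c)^j c^(i-j)` for `j ≤ i`. -/
def stepFn (p c : ℝ) (i j : ℕ) : ℝ :=
  (if j = i + 1 then p else 0) + (if j ≤ i then (1 - p) * binomPMF i (1 - c) j else 0)

/-- `law p c x t j = P_x(X_t = j)`, the time-`t` distribution of the chain started at `x`. -/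
def law (p c : ℝ) (x : ℕ) : ℕ → ℕ → ℝ
  | 0, j => if j = x then 1 else 0
  | t + 1, j => ∑' i, law p c x t i * stepFn p c i j

/-- Mass that a probability mass function assigns to a set `A ⊆ ℕ`. -/
def massOf (q : ℕ → ℝ) (A : Set ℕ) : ℝ := ∑' j, A.indicator q j

/-- Total variation distance between two distributions on ℕ (given by their pmfs):
the maximum over subsets `A ⊆ ℕ` of `|Q₁(A) - Q₂(A)|`. -/
def tvDist (q₁ q₂ : ℕ → ℝ) : ℝ := ⨆ A : Set ℕ, |massOf q₁ A - massOf q₂ A|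

lemma binomPMF_of_gt (n : ℕ) (ε : ℝ) (k : ℕ) (h : n < k) : binomPMF n ε k = 0 := by
  simp [binomPMF, Nat.not_le.mpr h]

lemma binomPMF_succ_zero (n : ℕ) (ε : ℝ) :
    binomPMF (n+1) ε 0 = (1-ε) * binomPMF n ε 0 := by
  simp [binomPMF, pow_succ]
  ring

lemma binomPMF_succ_succ (n : ℕ) (ε : ℝ) (k : ℕ) :
    binomPMF (n+1) ε (k+1) = (1-ε) * binomPMF n ε (k+1) + ε * binomPMF n ε k := by
  unfold binomPMF
  rcases lt_trichotomy k n with h | h | h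
  · rw [if_pos (by omega), if_pos (by omega), if_pos (by omega)]
    have h1 : n + 1 - (k+1) = (n - (k+1)) + 1 := by omega
    have h2 : n - k = (n - (k+1)) + 1 := by omega
    rw [h1, h2, Nat.choose_succ_succ, pow_succ, pow_succ]
    push_cast
    ring
  · subst h
    rw [if_pos (by omega), if_neg (by omega), if_pos (by omega)]
    simp [Nat.choose_self, pow_succ]
    ring
  · rw [if_neg (by omega), if_neg (by omega), if_neg (by omega)]
    ring

lemma bcdf_succ (ε : ℝ) (i : ℕ) : ∀ j : ℕ,
    ∑ k ∈ Finset.range (j+1), binomPMF (i+1) ε k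
      = ∑ k ∈ Finset.range (j+1), binomPMF i ε k - ε * binomPMF i ε j := by
  intro j
  induction j with
  | zero => simp [binomPMF_succ_zero]; ring
  | succ j ih =>
      rw [Finset.sum_range_succ, ih, Finset.sum_range_succ (n := j+1),
        binomPMF_succ_succ]
      ring

lemma step_sum (p c : ℝ) (i j : ℕ) :
    ∑ k ∈ Finset.range (j+1), stepFn p c i k
      = (if i + 1 ≤ j then p else 0)
        + (1-p) * ∑ k ∈ Finset.range (j+1), binomPMF i (1-c) k := by
  unfold stepFn
  rw [Finset.sum_add_distrib]
  congr 1
  · rw [Finset.sum_ite_eq' (Finset.range (j+1)) (i+1) (fun _ => p)]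
    simp [Nat.lt_succ_iff, Nat.succ_le_iff]
  · rw [Finset.mul_sum]
    refine Finset.sum_congr rfl fun k _ => ?_
    by_cases h : k ≤ i
    · simp [h]
    · simp [h, binomPMF_of_gt i (1-c) k (by omega)]

lemma step_sum_diff (p c : ℝ) (hα : (1 : ℝ) - c * (1-p) ≠ 0) (i j : ℕ) :
    (∑ k ∈ Finset.range (j+1), stepFn p c i k)
      - (∑ k ∈ Finset.range (j+1), stepFn p c (i+1) k)
      = (1 - c * (1-p)) * stepFn (p / (1 - c * (1-p))) c i j := by
  rw [step_sum, step_sum, bcdf_succ]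
  unfold stepFn
  have hq : (1 - c * (1-p)) * (p / (1 - c * (1-p))) = p := by
    field_simp
  have hb : (if j ≤ i then (1 - p / (1 - c*(1-p))) * binomPMF i (1-c) j else 0)
      = (1 - p / (1 - c*(1-p))) * binomPMF i (1-c) j := by
    by_cases h : j ≤ i
    · simp [h]
    · simp [h, binomPMF_of_gt i (1-c) j (by omega)]
  rw [hb]
  have h2 : (if j = i + 1 then (p / (1 - c*(1-p))) else 0)
      = if j = i + 1 then p / (1 - c*(1-p)) else 0 := rfl
  have key : (1 - c*(1-p)) * (1 - p / (1 - c*(1-p))) = (1-p) * (1-c) := by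
    field_simp
    ring
  by_cases hj : j = i + 1
  · subst hj
    rw [if_pos rfl, if_pos (le_refl _), if_neg (by omega)]
    rw [binomPMF_of_gt i (1-c) (i+1) (by omega)]
    rw [mul_add, ← mul_assoc, key, hq]
    ring
  · rw [if_neg hj, mul_add, ← mul_assoc, key]
    by_cases h1 : i + 1 ≤ j
    · rw [if_pos h1, if_pos (by omega)]
      ring
    · rw [if_neg h1, if_neg (by omega)]
      ring

lemma law_supp (p c : ℝ) (x : ℕ) : ∀ t i : ℕ, x + t < i → law p c x t i = 0
  | 0, i, h => by
      show (if i = x then (1:ℝ) else 0) = 0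
      rw [if_neg (by omega)]
  | t+1, i, h => by
      show (∑' i', law p c x t i' * stepFn p c i' i) = 0
      have hz : ∀ i' : ℕ, law p c x t i' * stepFn p c i' i = 0 := by
        intro i'
        by_cases h' : x + t < i'
        · rw [law_supp p c x t i' h', zero_mul]
        · have hs : stepFn p c i' i = 0 := by
            unfold stepFn
            rw [if_neg (by omega), if_neg (by omega)]
            ring
          rw [hs, mul_zero]
      simp [hz]

lemma law_succ_sum (p c : ℝ) (x t j N : ℕ) (hN : x + t < N) :
    law p c x (t+1) j = ∑ i ∈ Finset.range N, law p c x t i * stepFn p c i j := by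
  show (∑' i, law p c x t i * stepFn p c i j) = _
  refine tsum_eq_sum fun i hi => ?_
  rw [law_supp p c x t i (by simp [Finset.mem_range] at hi; omega), zero_mul]

lemma abel_sum (a S : ℕ → ℝ) : ∀ N : ℕ,
    ∑ i ∈ Finset.range (N+1), a i * S i
      = ∑ i ∈ Finset.range N, (∑ k ∈ Finset.range (i+1), a k) * (S i - S (i+1))
        + (∑ k ∈ Finset.range (N+1), a k) * S N := by
  intro N
  induction N with
  | zero => simp
  | succ N ih =>
      rw [Finset.sum_range_succ (f := fun i => a i * S i), ih,
        Finset.sum_range_succ (f := fun i => (∑ k ∈ Finset.range (i+1), a k) * (S i - S (i+1))),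
        Finset.sum_range_succ (f := a) (n := N+1)]
      ring


/-- **Lemma 3.6.** Let `α = 1 - c(1-p)`, `p̃ = p/α` and `A_j = {0, …, j}`. Then
`P_x(X_t ∈ A_j) - P_{x+1}(X_t ∈ A_j) = α^t P_x^{(p̃)}(X_t = j)`; in particular `≥` holds. -/
theorem monotone_difference_formula
    (p c : ℝ) (hp : p ∈ Set.Ioo (0 : ℝ) 1) (hc : c ∈ Set.Ioc (0 : ℝ) 1)
    (x t j : ℕ) :
    ((∑ k ∈ Finset.range (j + 1), law p c x t k) -
        (∑ k ∈ Finset.range (j + 1), law p c (x + 1) t k) =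
      (1 - c * (1 - p)) ^ t * law (p / (1 - c * (1 - p))) c x t j) ∧
    (1 - c * (1 - p)) ^ t * law (p / (1 - c * (1 - p))) c x t j ≤
      (∑ k ∈ Finset.range (j + 1), law p c x t k) -
        (∑ k ∈ Finset.range (j + 1), law p c (x + 1) t k) := by
  obtain ⟨hp0, hp1⟩ := hp
  obtain ⟨hc0, hc1⟩ := hc
  have hα : (0:ℝ) < 1 - c * (1 - p) := by nlinarith
  have hα' : (1:ℝ) - c * (1 - p) ≠ 0 := ne_of_gt hα
  set α := 1 - c * (1 - p) with hαdef
  set q := p / α with hqdef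
  have key : ∀ t j : ℕ,
      (∑ k ∈ Finset.range (j + 1), law p c x t k) -
        (∑ k ∈ Finset.range (j + 1), law p c (x + 1) t k)
      = α ^ t * law q c x t j := by
    intro t
    induction t with
    | zero =>
        intro j
        show (∑ k ∈ Finset.range (j+1), if k = x then (1:ℝ) else 0)
            - (∑ k ∈ Finset.range (j+1), if k = x + 1 then (1:ℝ) else 0)
          = α ^ 0 * (if j = x then (1:ℝ) else 0)
        rw [Finset.sum_ite_eq' (Finset.range (j+1)) x (fun _ => (1:ℝ)),
          Finset.sum_ite_eq' (Finset.range (j+1)) (x+1) (fun _ => (1:ℝ)),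
          pow_zero, one_mul]
        simp only [Finset.mem_range, Nat.lt_succ_iff]
        split_ifs <;> first | omega | norm_num
    | succ t ih =>
        intro j
        set N := x + t + 2 with hN
        have h1 : ∑ k ∈ Finset.range (j+1), law p c x (t+1) k
            = ∑ i ∈ Finset.range N, law p c x t i * ∑ k ∈ Finset.range (j+1), stepFn p c i k := by
          rw [Finset.sum_congr rfl (fun k _ => law_succ_sum p c x t k N (by omega)),
            Finset.sum_comm]
          exact Finset.sum_congr rfl fun i _ => (Finset.mul_sum _ _ _).symm
        have h2 : ∑ k ∈ Finset.range (j+1), law p c (x+1) (t+1) k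
            = ∑ i ∈ Finset.range N, law p c (x+1) t i * ∑ k ∈ Finset.range (j+1), stepFn p c i k := by
          rw [Finset.sum_congr rfl (fun k _ => law_succ_sum p c (x+1) t k N (by omega)),
            Finset.sum_comm]
          exact Finset.sum_congr rfl fun i _ => (Finset.mul_sum _ _ _).symm
        rw [h1, h2, ← Finset.sum_sub_distrib]
        have h3 : ∀ i ∈ Finset.range N,
            law p c x t i * (∑ k ∈ Finset.range (j+1), stepFn p c i k)
              - law p c (x+1) t i * (∑ k ∈ Finset.range (j+1), stepFn p c i k)
            = (law p c x t i - law p c (x+1) t i) * (∑ k ∈ Finset.range (j+1), stepFn p c i k) :=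
          fun i _ => (sub_mul _ _ _).symm
        rw [Finset.sum_congr rfl h3]
        have habel := abel_sum (fun i => law p c x t i - law p c (x+1) t i)
          (fun i => ∑ k ∈ Finset.range (j+1), stepFn p c i k) (x+t+1)
        rw [show N = (x+t+1)+1 from rfl, habel]
        have hA : ∀ i : ℕ, (∑ k ∈ Finset.range (i+1),
            (law p c x t k - law p c (x+1) t k)) = α ^ t * law q c x t i := by
          intro i
          rw [Finset.sum_sub_distrib]
          exact ih i
        have hlast : (∑ k ∈ Finset.range ((x+t+1)+1),
            (law p c x t k - law p c (x+1) t k)) = 0 := by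
          rw [hA, law_supp q c x t (x+t+1) (by omega), mul_zero]
        rw [hlast, zero_mul, add_zero]
        have h4 : ∀ i ∈ Finset.range (x+t+1),
            (∑ k ∈ Finset.range (i+1), (law p c x t k - law p c (x+1) t k)) *
              ((∑ k ∈ Finset.range (j+1), stepFn p c i k)
                - (∑ k ∈ Finset.range (j+1), stepFn p c (i+1) k))
            = α ^ (t+1) * (law q c x t i * stepFn q c i j) := by
          intro i _
          rw [hA, step_sum_diff p c hα' i j, pow_succ]
          ring
        rw [Finset.sum_congr rfl h4, ← Finset.mul_sum,
          ← law_succ_sum q c x t j (x+t+1) (by omega)]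
  exact ⟨key t j, le_of_eq (key t j).symm⟩
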